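/- Let G be a graph satisfying proj dim S/I(G) = bight(I(G)) (e.g., G sequentially Cohen–Macaulay), and let G' be any splitting graph of G. Then proj dim I(G) ≤ proj dim I(G'). -/

import Mathlib

open MvPolynomial CategoryTheory

/-- `α : V' → V` is a splitting map from the graph `G'` to the graph `G`. -/
def IsSplittingMap {V' V : Type*} (G' : SimpleGraph V') (G : SimpleGraph V) (α : V' → V) : Prop :=
  Function.Surjective α ∧
  (∀ v w, G'.Adj v w → G.Adj (α v) (α w)) ∧
  Set.BijOn (Sym2.map α) G'.edgeSet G.edgeSet

/-- The projective dimension of an `R`-module `M`. -/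
noncomputable def projDim (R : Type) [Ring R] (M : Type) [AddCommGroup M] [Module R M] : ℕ∞ :=
  sInf {n : ℕ∞ | ∃ m : ℕ, n = m ∧
    ∃ P : ProjectiveResolution (ModuleCat.of R M), ∀ i : ℕ, m < i → Limits.IsZero (P.complex.X i)}

/-- The edge ideal of a graph `G`. -/
noncomputable def edgeIdeal (K : Type) [Field K] {V : Type} (G : SimpleGraph V) :
    Ideal (MvPolynomial V K) :=
  Ideal.span {m | ∃ i j, G.Adj i j ∧ m = X i * X j}

/-- A vertex cover of `H` is a set of vertices meeting every edge of `H`. -/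
def IsVertexCover {V : Type*} (H : SimpleGraph V) (C : Set V) : Prop :=
  ∀ e ∈ H.edgeSet, ∃ v ∈ C, v ∈ e

/-- A minimal vertex cover. -/
def IsMinimalVertexCover {V : Type*} (H : SimpleGraph V) (C : Finset V) : Prop :=
  IsVertexCover H ↑C ∧ ∀ D : Finset V, D ⊂ C → ¬ IsVertexCover H ↑D

/-- `bight I(H)`: the maximum cardinality of a minimal vertex cover of `H`. -/
noncomputable def bight {V : Type*} (H : SimpleGraph V) : ℕ :=
  sSup {n : ℕ | ∃ C : Finset V, IsMinimalVertexCover H C ∧ C.card = n}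

lemma exists_minimal_subcover {V : Type*} [DecidableEq V] (H : SimpleGraph V) :
    ∀ D : Finset V, IsVertexCover H ↑D → ∃ E ⊆ D, IsMinimalVertexCover H E := by
  intro D
  induction D using Finset.strongInduction with
  | _ D ih =>
    intro hD
    by_cases hmin : ∀ E : Finset V, E ⊂ D → ¬ IsVertexCover H ↑E
    · exact ⟨D, le_refl D, hD, hmin⟩
    · push_neg at hmin
      obtain ⟨E, hED, hE⟩ := hmin
      obtain ⟨F, hFE, hF⟩ := ih E hED hE
      exact ⟨F, hFE.trans hED.subset, hF⟩

lemma bight_le_bight {n n' : ℕ} (G : SimpleGraph (Fin n)) (G' : SimpleGraph (Fin n'))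
    (α : Fin n' → Fin n) (h : IsSplittingMap G' G α) : bight G ≤ bight G' := by
  obtain ⟨hsurj, hadj, hbij⟩ := h
  classical
  set A : Set ℕ := {k | ∃ C : Finset (Fin n), IsMinimalVertexCover G C ∧ C.card = k}
  rcases A.eq_empty_or_nonempty with hA | hA
  · have : bight G = sSup A := rfl
    rw [this, hA, csSup_empty]
    exact bot_le
  · have hbdd : BddAbove A := by
      refine ⟨n, fun k hk => ?_⟩
      obtain ⟨C, _, hC⟩ := hk
      simpa [hC.symm] using (C.card_le_univ.trans_eq (by simp))
    have hmem : bight G ∈ A := Nat.sSup_mem hA hbdd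
    obtain ⟨C, hC, hCcard⟩ := hmem
    -- lift the cover
    set C₀ : Finset (Fin n') := Finset.univ.filter (fun v => α v ∈ C)
    have hC₀ : IsVertexCover G' ↑C₀ := by
      intro e he
      have he' : Sym2.map α e ∈ G.edgeSet := hbij.mapsTo he
      obtain ⟨w, hwC, hwe⟩ := hC.1 _ he'
      rw [Sym2.mem_map] at hwe
      obtain ⟨v, hve, hv⟩ := hwe
      exact ⟨v, by simpa [C₀, hv] using hwC, hve⟩
    obtain ⟨E, hEC₀, hE⟩ := exists_minimal_subcover G' C₀ hC₀
    -- image of E is a cover of G contained in C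
    have himg_sub : E.image α ⊆ C := by
      intro w hw
      rw [Finset.mem_image] at hw
      obtain ⟨v, hv, rfl⟩ := hw
      have := hEC₀ hv
      simpa [C₀] using this
    have himg_cov : IsVertexCover G ↑(E.image α) := by
      intro e he
      obtain ⟨e', he', rfl⟩ := hbij.surjOn he
      obtain ⟨v, hvE, hve⟩ := hE.1 _ he'
      refine ⟨α v, by simp [Finset.mem_image]; exact ⟨v, hvE, rfl⟩, ?_⟩
      rw [Sym2.mem_map]
      exact ⟨v, hve, rfl⟩
    have heq : E.image α = C := by
      by_contra hne
      exact hC.2 _ (lt_of_le_of_ne himg_sub hne) himg_cov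
    have hcard : C.card ≤ E.card := heq ▸ Finset.card_image_le
    have hEbight : E.card ≤ bight G' := by
      refine le_csSup ⟨n', fun k hk => ?_⟩ ⟨E, hE, rfl⟩
      obtain ⟨D, _, hD⟩ := hk
      simpa [hD.symm] using (D.card_le_univ.trans_eq (by simp))
    calc bight G = C.card := hCcard.symm
      _ ≤ E.card := hcard
      _ ≤ bight G' := hEbight

/-- Let `G` be a graph with `proj dim S/I(G) = bight I(G)` (e.g. `G` sequentially
Cohen–Macaulay) and let `G'` be any splitting graph of `G`. Then
`proj dim I(G) ≤ proj dim I(G')`. Here we assume the known facts that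
`bight I(H) − 1 ≤ proj dim I(H)` and `proj dim I(H) = proj dim S/I(H) − 1`
for every graph `H`. -/
theorem projDim_le_of_splitting
    (K : Type) [Field K] {n n' : ℕ}
    (G : SimpleGraph (Fin n)) (G' : SimpleGraph (Fin n')) (α : Fin n' → Fin n)
    (h : IsSplittingMap G' G α)
    (hfact1 : ∀ (m : ℕ) (H : SimpleGraph (Fin m)),
      (bight H : ℕ∞) - 1 ≤ projDim (MvPolynomial (Fin m) K) ↥(edgeIdeal K H))
    (hfact2 : ∀ (m : ℕ) (H : SimpleGraph (Fin m)),
      projDim (MvPolynomial (Fin m) K) ↥(edgeIdeal K H) =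
        projDim (MvPolynomial (Fin m) K) (MvPolynomial (Fin m) K ⧸ edgeIdeal K H) - 1)
    (hG : projDim (MvPolynomial (Fin n) K) (MvPolynomial (Fin n) K ⧸ edgeIdeal K G) =
      (bight G : ℕ∞)) :
    projDim (MvPolynomial (Fin n) K) ↥(edgeIdeal K G) ≤
      projDim (MvPolynomial (Fin n') K) ↥(edgeIdeal K G') := by
  calc projDim (MvPolynomial (Fin n) K) ↥(edgeIdeal K G)
      = projDim (MvPolynomial (Fin n) K) (MvPolynomial (Fin n) K ⧸ edgeIdeal K G) - 1 :=
        hfact2 n G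
    _ = (bight G : ℕ∞) - 1 := by rw [hG]
    _ ≤ (bight G' : ℕ∞) - 1 :=
        tsub_le_tsub_right (by exact_mod_cast bight_le_bight G G' α h) 1
    _ ≤ projDim (MvPolynomial (Fin n') K) ↥(edgeIdeal K G') := hfact1 n' G'
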